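/- Let 0 < η < π/3 with 2|a|⁴ < 1 where |a| = 1/(2cos η), and let c = 1/(1-|a|⁴), a = e^{-iη}/(2cos η), z₀ = ca, w₁ = 1 - c|a|²a. Then Re z₀ ∈ (0,1), Re w₁ ∈ (0,1), and Im w₁ ∈ (0,1). -/

import Mathlib

open Real Set

theorem stmt16 (η : ℝ) (hη0 : 0 < η) (hη1 : η < π / 3)
    (a : ℂ) (ha : a = Complex.exp (-(η : ℂ) * Complex.I) / (2 * Real.cos η))
    (h4 : 2 * ‖a‖ ^ 4 < 1)
    (c : ℝ) (hc : c = 1 / (1 - ‖a‖ ^ 4))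
    (z₀ : ℂ) (hz₀ : z₀ = (c : ℂ) * a)
    (w₁ : ℂ) (hw₁ : w₁ = 1 - (c : ℂ) * (‖a‖ : ℂ) ^ 2 * a) :
    z₀.re ∈ Set.Ioo (0 : ℝ) 1 ∧ w₁.re ∈ Set.Ioo (0 : ℝ) 1 ∧ w₁.im ∈ Set.Ioo (0 : ℝ) 1 := by
  have hπ := Real.pi_pos
  have hco : 0 < Real.cos η := Real.cos_pos_of_mem_Ioo ⟨by linarith, by linarith⟩
  have hs : 0 < Real.sin η := Real.sin_pos_of_pos_of_lt_pi hη0 (by linarith)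
  have hsc : Real.sin η ^ 2 + Real.cos η ^ 2 = 1 := Real.sin_sq_add_cos_sq η
  obtain ⟨co, hcodef⟩ : ∃ x, x = Real.cos η := ⟨_, rfl⟩
  obtain ⟨s, hsdef⟩ : ∃ x, x = Real.sin η := ⟨_, rfl⟩
  rw [← hcodef] at hco ha
  rw [← hsdef] at hs
  rw [← hcodef, ← hsdef] at hsc
  have hcoC : (co : ℂ) ≠ 0 := by exact_mod_cast hco.ne'
  have hexp : Complex.exp (-(η : ℂ) * Complex.I) = (co : ℂ) - (s : ℂ) * Complex.I := by
    rw [Complex.exp_mul_I, Complex.cos_neg, Complex.sin_neg, ← Complex.ofReal_cos,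
      ← Complex.ofReal_sin, ← hcodef, ← hsdef]
    ring
  obtain ⟨r, hrdef⟩ : ∃ x, x = 1 / (2 * co) := ⟨_, rfl⟩
  have hr : 0 < r := by rw [hrdef]; positivity
  have habs : ‖a‖ = r := by
    have h1 : ‖Complex.exp (-(η : ℂ) * Complex.I)‖ = 1 := by
      rw [Complex.norm_exp]; simp
    have h2 : ((2 : ℂ) * (co : ℂ)) = ((2 * co : ℝ) : ℂ) := by push_cast; ring
    rw [ha, norm_div, h1, h2, Complex.norm_real, Real.norm_eq_abs, abs_of_pos (by linarith), hrdef]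
  have ha2 : a = ((1 / 2 : ℝ) : ℂ) + ((-(s / (2 * co)) : ℝ) : ℂ) * Complex.I := by
    rw [ha, hexp]
    push_cast
    field_simp
    ring
  have hare : a.re = 1 / 2 := by
    rw [ha2]
    simp only [Complex.add_re, Complex.ofReal_re, Complex.mul_re, Complex.ofReal_im,
      Complex.I_re, Complex.I_im]
    ring
  have haim : a.im = -(s / (2 * co)) := by
    rw [ha2]
    simp only [Complex.add_im, Complex.ofReal_im, Complex.mul_im, Complex.ofReal_re,
      Complex.I_re, Complex.I_im]
    ring
  rw [habs] at h4 hc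
  have hden : 0 < 1 - r ^ 4 := by nlinarith
  have hcpos : 0 < c := by rw [hc]; positivity
  have hclt2 : c < 2 := by
    rw [hc, div_lt_iff₀ hden]; nlinarith
  have hr2 : r ^ 2 < 1 := by nlinarith
  have hzre : z₀.re = c * (1 / 2) := by
    rw [hz₀]
    simp [Complex.mul_re, hare, haim]
  have hwc : (c : ℂ) * (r : ℂ) ^ 2 * a = ((c * r ^ 2 : ℝ) : ℂ) * a := by
    push_cast; ring
  have hsr : s / (2 * co) = s * r := by rw [hrdef]; ring
  have hwre : w₁.re = 1 - c * r ^ 2 * (1 / 2) := by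
    rw [hw₁, habs, hwc]
    simp [Complex.sub_re, Complex.mul_re, Complex.mul_im, hare, haim, ← Complex.ofReal_pow]
  have hwim : w₁.im = c * r ^ 2 * (s * r) := by
    rw [hw₁, habs, hwc]
    simp [Complex.sub_im, Complex.mul_im, Complex.mul_re, hare, haim, hsr, ← Complex.ofReal_pow]
  have hcr2 : c * r ^ 2 < 2 := by
    rw [hc, div_mul_eq_mul_div, div_lt_iff₀ hden]; nlinarith
  have hr1 : r * (2 * co) = 1 := by rw [hrdef]; field_simp
  have e1 : r ^ 4 * (2 * co) ^ 4 = 1 := by rw [← mul_pow, hr1]; norm_num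
  have t1 : 2 * r ^ 4 * (16 * co ^ 4) < 1 * (16 * co ^ 4) :=
    mul_lt_mul_of_pos_right h4 (by positivity)
  have t2 : 2 * r ^ 4 * (16 * co ^ 4) = 2 := by linear_combination 2 * e1
  have h8 : 1 < 8 * co ^ 4 := by linarith
  have h2sc : 2 * s * co ≤ 1 := by
    have hx : (s - co) ^ 2 = s ^ 2 - 2 * s * co + co ^ 2 := by ring
    have hy := sq_nonneg (s - co)
    linarith
  have key2 : s * (2 * co) < (2 * co) ^ 4 - 1 := by
    have hx : s * (2 * co) = 2 * s * co := by ring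
    have hy : (2 * co) ^ 4 = 16 * co ^ 4 := by ring
    linarith
  have e2 : r ^ 3 * s = r ^ 4 * (2 * co) * s := by
    rw [show r ^ 4 * (2 * co) = r ^ 3 * (r * (2 * co)) by ring, hr1, mul_one]
  have hkey : r ^ 3 * s < 1 - r ^ 4 := by
    rw [e2, ← e1]
    have hz := mul_lt_mul_of_pos_left key2 (pow_pos hr 4)
    have hxa : r ^ 4 * (s * (2 * co)) = r ^ 4 * (2 * co) * s := by ring
    have hxb : r ^ 4 * ((2 * co) ^ 4 - 1) = r ^ 4 * (2 * co) ^ 4 - r ^ 4 := by ring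
    linarith
  have him1 : c * r ^ 2 * (s * r) < 1 := by
    rw [hc, div_mul_eq_mul_div, div_mul_eq_mul_div, div_lt_one hden]
    have hx : 1 * r ^ 2 * (s * r) = r ^ 3 * s := by ring
    linarith
  have himpos : 0 < c * r ^ 2 * (s * r) := by positivity
  have hwrepos : 0 < c * r ^ 2 * (1 / 2) := by positivity
  refine ⟨⟨by rw [hzre]; linarith, by rw [hzre]; linarith⟩,
    ⟨by rw [hwre]; linarith, by rw [hwre]; linarith⟩,
    ⟨by rw [hwim]; exact himpos, by rw [hwim]; exact him1⟩⟩
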